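/- Let C be a convex subset of a topological real vector space with fri C ≠ ∅. Then closure(C) = closure(fri C). -/

import Mathlib

open Pointwise

/-- A face of a convex set `C`: a convex subset `F ⊆ C` such that whenever a point of `F`
lies in the open segment between two points of `C`, both endpoints belong to `F`. -/
def IsFace {X : Type*} [AddCommGroup X] [Module ℝ X] (C F : Set X) : Prop :=
  F ⊆ C ∧ Convex ℝ F ∧
    ∀ x ∈ F, ∀ y ∈ C, ∀ z ∈ C, x ∈ openSegment ℝ y z → y ∈ F ∧ z ∈ F

/-- The minimal face of `C` containing `x`: the intersection of all faces containing `x`. -/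
def minFace {X : Type*} [AddCommGroup X] [Module ℝ X] (C : Set X) (x : X) : Set X :=
  ⋂₀ {F | IsFace C F ∧ x ∈ F}

/-- The conic hull of a set. -/
def coneHull {X : Type*} [AddCommGroup X] [Module ℝ X] (S : Set X) : Set X :=
  {w | ∃ (a : ℝ) (s : X), 0 ≤ a ∧ s ∈ S ∧ w = a • s}

/-- The intrinsic core of a convex set. -/
def icr {X : Type*} [AddCommGroup X] [Module ℝ X] (C : Set X) : Set X :=
  {x ∈ C | ∀ y ∈ C, ∃ z ∈ C, x ∈ openSegment ℝ y z}

/-- The face relative interior of a convex set in a topological vector space. -/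
def fri {X : Type*} [AddCommGroup X] [Module ℝ X] [TopologicalSpace X] (C : Set X) : Set X :=
  {x ∈ C | C ⊆ closure (minFace C x)}

/-- if `fri C ≠ ∅`, then `closure C = closure (fri C)`. -/
theorem closure_eq_closure_fri {X : Type*} [AddCommGroup X] [Module ℝ X] [TopologicalSpace X]
    [IsTopologicalAddGroup X] [ContinuousSMul ℝ X]
    (C : Set X) (hC : Convex ℝ C) (hne : (fri C).Nonempty) :
    closure C = closure (fri C) := by
  refine Set.Subset.antisymm ?_ (closure_mono fun x hx => hx.1)
  rw [← closure_closure (s := fri C)]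
  apply closure_mono
  obtain ⟨x₀, hx₀C, hx₀⟩ := hne
  intro y hy
  have hseg : openSegment ℝ x₀ y ⊆ fri C := by
    intro z hz
    have hzC : z ∈ C := hC.openSegment_subset hx₀C hy hz
    refine ⟨hzC, ?_⟩
    have hmin : minFace C x₀ ⊆ minFace C z := by
      intro w hw F hF
      obtain ⟨hface, hzF⟩ := hF
      have hx₀F : x₀ ∈ F := (hface.2.2 z hzF x₀ hx₀C y hy hz).1
      exact hw F ⟨hface, hx₀F⟩
    exact hx₀.trans (closure_mono hmin)
  have : y ∈ closure (openSegment ℝ x₀ y) :=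
    segment_subset_closure_openSegment (right_mem_segment ℝ x₀ y)
  exact closure_mono hseg this
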